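/- Let λ₁, λ₂ > 0 and let f : ℝ^m × ℝ^n → ℝ be continuously differentiable in x with |f(x,y)| ≤ 1 for all (x,y) and ‖∇_x f(x,y)‖ ≤ L₀ for all (x,y). Let q be a probability density on ℝ^n and define F(x) = Z^{−1} exp(−λ₂^{−1}[∫ f(x,y) q(y) dy + λ₁‖x‖²]) with Z = ∫_{ℝ^m} exp(−λ₂^{−1}[∫ f(x,y) q(y) dy + λ₁‖x‖²]) dx. Set γ_m = (λ₁/(λ₂ π))^{m/2} e^{2/λ₂}. Then for every x ∈ ℝ^m: F(x) ≤ γ_m · exp(−(λ₁/λ₂)‖x‖²), and ‖∇F(x)‖ ≤ γ_m · (L₀/λ₂ + √(2λ₁/λ₂)). -/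

import Mathlib

open MeasureTheory Real

noncomputable section

abbrev E (d : ℕ) := EuclideanSpace ℝ (Fin d)

def IsDensity {d : ℕ} (p : E d → ℝ) : Prop :=
  Measurable p ∧ (∀ θ, 0 ≤ p θ) ∧ ∫ θ, p θ = 1

theorem fderiv_param_meas (m n : ℕ) (f : E m → E n → ℝ)
    (hf_meas : Measurable (fun z : E m × E n => f z.1 z.2))
    (hf_smooth : ∀ y, ContDiff ℝ 1 (fun x => f x y)) (x₀ : E m) :
    AEStronglyMeasurable (fun y => fderiv ℝ (fun x' => f x' y) x₀)
      (volume : Measure (E n)) := by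
  have hfy : ∀ x : E m, Measurable (fun y => f x y) := fun x =>
    hf_meas.comp (measurable_prodMk_left)
  have happ : ∀ v : E m, Measurable (fun y => fderiv ℝ (fun x' => f x' y) x₀ v) := by
    intro v
    have hdiff : ∀ y, HasDerivAt (fun t : ℝ => f (x₀ + t • v) y)
        (fderiv ℝ (fun x' => f x' y) x₀ v) 0 := by
      intro y
      have hL : HasFDerivAt (fun x' => f x' y) (fderiv ℝ (fun x' => f x' y) x₀) x₀ :=
        (((hf_smooth y).differentiable one_ne_zero) x₀).hasFDerivAt
      have hline : HasDerivAt (fun t : ℝ => x₀ + t • v) v 0 := by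
        simpa using ((hasDerivAt_id (0:ℝ)).smul_const v).const_add x₀
      have hx : x₀ = x₀ + (0:ℝ) • v := by simp
      rw [hx] at hL
      have hcomp := hL.comp_hasDerivAt 0 hline
      simp at hcomp; exact hcomp
    have hlim : ∀ y, Filter.Tendsto
        (fun k : ℕ => (f (x₀ + ((k:ℝ)+1)⁻¹ • v) y - f x₀ y) * ((k:ℝ)+1))
        Filter.atTop (nhds (fderiv ℝ (fun x' => f x' y) x₀ v)) := by
      intro y
      have hslope := (hasDerivAt_iff_tendsto_slope).1 (hdiff y)
      have hseq : Filter.Tendsto (fun k : ℕ => ((k:ℝ)+1)⁻¹) Filter.atTop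
          (nhdsWithin (0:ℝ) {(0:ℝ)}ᶜ) := by
        apply tendsto_nhdsWithin_of_tendsto_nhds_of_eventually_within
        · exact tendsto_one_div_add_atTop_nhds_zero_nat.congr (by intro k; simp [one_div])
        · exact Filter.Eventually.of_forall fun k =>
            Set.mem_compl_singleton_iff.mpr (by positivity)
      have := hslope.comp hseq
      refine this.congr (fun k => ?_)
      simp only [Function.comp, slope_def_field, sub_zero, div_eq_mul_inv, inv_inv, zero_smul, add_zero]
    exact measurable_of_tendsto_metrizable
      (fun k => ((hfy _).sub (hfy _)).mul_const _) (tendsto_pi_nhds.2 hlim)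
  set L : E n → (E m →L[ℝ] ℝ) := fun y => fderiv ℝ (fun x' => f x' y) x₀ with hLdef
  have hgrad : Measurable (fun y => (InnerProductSpace.toDual ℝ (E m)).symm (L y)) := by
    refine (WithLp.measurable_toLp 2 (Fin m → ℝ)).comp
      (f := fun y => WithLp.ofLp ((InnerProductSpace.toDual ℝ (E m)).symm (L y))) ?_
    apply measurable_pi_lambda
    intro i
    have hcoord : ∀ y, (InnerProductSpace.toDual ℝ (E m)).symm (L y) i
        = L y (EuclideanSpace.single i 1) := by
      intro y
      have h1 : inner ℝ ((InnerProductSpace.toDual ℝ (E m)).symm (L y))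
          (EuclideanSpace.single i (1:ℝ)) = L y (EuclideanSpace.single i 1) :=
        InnerProductSpace.toDual_symm_apply
      rw [EuclideanSpace.inner_single_right] at h1; simpa using h1
    simpa only [hcoord] using happ (EuclideanSpace.single i 1)
  have hL : Measurable L := by
    have : L = fun y => (InnerProductSpace.toDual ℝ (E m))
        ((InnerProductSpace.toDual ℝ (E m)).symm (L y)) := by
      funext y; simp
    rw [this]
    exact ((InnerProductSpace.toDual ℝ (E m)).continuous.measurable).comp hgrad
  exact hL.stronglyMeasurable.aestronglyMeasurable

set_option maxHeartbeats 2000000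
set_option synthInstance.maxHeartbeats 1000000

/-- Pointwise and gradient bounds on the Gibbs best-response density:
`F(x) ≤ γ_m exp(−(λ₁/λ₂)‖x‖²)` and `‖∇F(x)‖ ≤ γ_m (L₀/λ₂ + √(2λ₁/λ₂))`, where
`γ_m = (λ₁/(λ₂π))^{m/2} e^{2/λ₂}`. -/
theorem gibbs_best_response_bounds (m n : ℕ) (lam1 lam2 L0 : ℝ)
    (hlam1 : 0 < lam1) (hlam2 : 0 < lam2) (hL0 : 0 < L0)
    (f : E m → E n → ℝ)
    (hf_meas : Measurable (fun z : E m × E n => f z.1 z.2))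
    (hf_smooth : ∀ y, ContDiff ℝ 1 (fun x => f x y))
    (hf_bdd : ∀ x y, |f x y| ≤ 1)
    (hf_grad : ∀ x y, ‖gradient (fun x' => f x' y) x‖ ≤ L0)
    (q : E n → ℝ) (hq : IsDensity q)
    (F : E m → ℝ) (Z : ℝ)
    (hZ : Z = ∫ x, Real.exp (-lam2⁻¹ * ((∫ y, f x y * q y) + lam1 * ‖x‖ ^ 2)))
    (hF : ∀ x, F x = Z⁻¹
      * Real.exp (-lam2⁻¹ * ((∫ y, f x y * q y) + lam1 * ‖x‖ ^ 2)))
    (γ : ℝ) (hγ : γ = (lam1 / (lam2 * π)) ^ ((m : ℝ) / 2) * Real.exp (2 / lam2)) :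
    ∀ x : E m,
      F x ≤ γ * Real.exp (-(lam1 / lam2) * ‖x‖ ^ 2) ∧
      ‖gradient F x‖ ≤ γ * (L0 / lam2 + Real.sqrt (2 * lam1 / lam2)) := by
  obtain ⟨hq_meas, hq_nonneg, hq_one⟩ := hq
  have hq_int : Integrable q := by
    by_contra h
    rw [integral_undef h] at hq_one
    exact one_ne_zero hq_one.symm
  set a : ℝ := lam1 / lam2 with ha
  have ha_pos : 0 < a := div_pos hlam1 hlam2
  -- the mean payoff
  set g : E m → ℝ := fun x => ∫ y, f x y * q y with hgdef
  have hfy : ∀ x : E m, Measurable (fun y => f x y) := fun x =>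
    hf_meas.comp measurable_prodMk_left
  have hint : ∀ x, Integrable (fun y => f x y * q y) := by
    intro x
    refine hq_int.mono' (((hfy x).mul hq_meas).aestronglyMeasurable)
      (Filter.Eventually.of_forall fun y => ?_)
    rw [norm_mul, Real.norm_eq_abs, Real.norm_eq_abs, abs_of_nonneg (hq_nonneg y)]
    nlinarith [hf_bdd x y, abs_nonneg (f x y), hq_nonneg y]
  have hg_abs : ∀ x, |g x| ≤ 1 := by
    intro x
    have h1 : |g x| ≤ ∫ y, |f x y| * |q y| := by
      simpa [Real.norm_eq_abs, abs_mul] using norm_integral_le_integral_norm (fun y => f x y * q y)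
    refine h1.trans ?_
    rw [← hq_one]
    refine integral_mono (by simpa [abs_mul] using (hint x).abs) hq_int (fun y => ?_)
    rw [abs_of_nonneg (hq_nonneg y)]
    nlinarith [hf_bdd x y, abs_nonneg (f x y), hq_nonneg y]
  -- norm of fderiv equals norm of gradient
  have hng : ∀ (h : E m → ℝ) (x : E m), ‖gradient h x‖ = ‖fderiv ℝ h x‖ := fun h x =>
    LinearIsometryEquiv.norm_map (InnerProductSpace.toDual ℝ (E m)).symm _
  have hfderiv_le : ∀ (y : E n) (x : E m), ‖fderiv ℝ (fun x' => f x' y) x‖ ≤ L0 := by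
    intro y x
    rw [← hng]
    exact hf_grad x y
  -- derivative of g under the integral sign
  set Φ : E m → (E m →L[ℝ] ℝ) :=
    fun x => ∫ y, q y • fderiv ℝ (fun x' => f x' y) x with hΦdef
  have hΦ'meas : ∀ x : E m, AEStronglyMeasurable
      (fun y => q y • fderiv ℝ (fun x' => f x' y) x) (volume : Measure (E n)) :=
    fun x => hq_meas.aestronglyMeasurable.smul (fderiv_param_meas m n f hf_meas hf_smooth x)
  have hΦ'bdd : ∀ (x : E m) (y : E n),
      ‖q y • fderiv ℝ (fun x' => f x' y) x‖ ≤ L0 * q y := by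
    intro x y
    rw [norm_smul, Real.norm_eq_abs, abs_of_nonneg (hq_nonneg y), mul_comm]
    exact mul_le_mul_of_nonneg_right (hfderiv_le y x) (hq_nonneg y)
  have hΦ'int : ∀ x : E m, Integrable (fun y => q y • fderiv ℝ (fun x' => f x' y) x) :=
    fun x => Integrable.mono' (hq_int.const_mul L0) (hΦ'meas x)
      (Filter.Eventually.of_forall (hΦ'bdd x))
  have hgderiv : ∀ x₀ : E m, HasFDerivAt g (Φ x₀) x₀ := by
    intro x₀
    refine hasFDerivAt_integral_of_dominated_of_fderiv_le (s := Metric.ball x₀ 1)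
      (bound := fun y => L0 * q y) (Metric.ball_mem_nhds x₀ one_pos)
      (Filter.Eventually.of_forall fun x => ((hfy x).mul hq_meas).aestronglyMeasurable)
      (hint x₀) (hΦ'meas x₀)
      (Filter.Eventually.of_forall fun y x _ => hΦ'bdd x y)
      (hq_int.const_mul L0)
      (Filter.Eventually.of_forall fun y x _ => ?_)
    exact (((hf_smooth y).differentiable one_ne_zero x).hasFDerivAt).mul_const (q y)
  have hΦnorm : ∀ x : E m, ‖Φ x‖ ≤ L0 := by
    intro x
    refine (norm_integral_le_integral_norm _).trans ?_
    have : ∫ y, ‖q y • fderiv ℝ (fun x' => f x' y) x‖ ≤ ∫ y, L0 * q y :=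
      integral_mono (hΦ'int x).norm (hq_int.const_mul L0) (hΦ'bdd x)
    rwa [integral_const_mul, hq_one, mul_one] at this
  -- continuity and integrability of the Gibbs integrand
  have hg_cont : Continuous g :=
    Differentiable.continuous (fun x => (hgderiv x).differentiableAt)
  set h : E m → ℝ := fun x => Real.exp (-lam2⁻¹ * (g x + lam1 * ‖x‖ ^ 2)) with hhdef
  have hh_cont : Continuous h := by
    apply Real.continuous_exp.comp
    exact (continuous_const.mul (hg_cont.add (continuous_const.mul
      ((continuous_norm).pow 2)))) 
  have hGauss_int : Integrable (fun x : E m => Real.exp (-a * ‖x‖ ^ 2)) := by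
    have hi := (GaussianFourier.integrable_cexp_neg_mul_sq_norm_add (V := E m)
      (b := (a : ℂ)) (by simpa using ha_pos) 0 0).norm
    refine hi.congr' ?_ (Filter.Eventually.of_forall fun x => ?_)
    · exact (Real.continuous_exp.comp
        (continuous_const.mul ((continuous_norm).pow 2))).aestronglyMeasurable
    · rw [Real.norm_eq_abs (rexp _), abs_of_nonneg (Real.exp_nonneg _), Real.norm_eq_abs,
        abs_of_nonneg (norm_nonneg _), Complex.norm_exp]
      norm_num
      left
      norm_cast
  have hGauss_val : ∫ x : E m, Real.exp (-a * ‖x‖ ^ 2) = (π / a) ^ ((m : ℝ) / 2) := by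
    rw [GaussianFourier.integral_rexp_neg_mul_sq_norm ha_pos, finrank_euclideanSpace_fin]
  have hh_ub : ∀ x : E m, h x ≤ Real.exp lam2⁻¹ * Real.exp (-a * ‖x‖ ^ 2) := by
    intro x
    rw [← Real.exp_add, hhdef]
    apply Real.exp_le_exp.2
    have := (abs_le.1 (hg_abs x)).1
    have hinv : 0 < lam2⁻¹ := inv_pos.2 hlam2
    have : -lam2⁻¹ * g x ≤ lam2⁻¹ := by nlinarith
    have haa : lam2⁻¹ * lam1 = a := by field_simp [ha]; rw [ha]; field_simp
    nlinarith [sq_nonneg ‖x‖]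
  have hh_lb : ∀ x : E m, Real.exp (-lam2⁻¹) * Real.exp (-a * ‖x‖ ^ 2) ≤ h x := by
    intro x
    rw [← Real.exp_add, hhdef]
    apply Real.exp_le_exp.2
    have := (abs_le.1 (hg_abs x)).2
    have hinv : 0 < lam2⁻¹ := inv_pos.2 hlam2
    have haa : lam2⁻¹ * lam1 = a := by field_simp [ha]; rw [ha]; field_simp
    nlinarith
  have hh_int : Integrable h := by
    refine (hGauss_int.const_mul (Real.exp lam2⁻¹)).mono' hh_cont.aestronglyMeasurable
      (Filter.Eventually.of_forall fun x => ?_)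
    rw [Real.norm_eq_abs, abs_of_nonneg (Real.exp_nonneg _)]
    exact hh_ub x
  have hZh : Z = ∫ x, h x := hZ
  have hZ_lb : Real.exp (-lam2⁻¹) * (π / a) ^ ((m : ℝ) / 2) ≤ Z := by
    rw [hZh, ← hGauss_val, ← integral_const_mul]
    exact integral_mono (hGauss_int.const_mul _) hh_int hh_lb
  have hπa_pos : 0 < (π / a) ^ ((m : ℝ) / 2) :=
    Real.rpow_pos_of_pos (div_pos Real.pi_pos ha_pos) _
  have hZ_pos : 0 < Z := lt_of_lt_of_le (by positivity) hZ_lb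
  have hZinv : Z⁻¹ ≤ Real.exp lam2⁻¹ * (a / π) ^ ((m : ℝ) / 2) := by
    have h1 : Z⁻¹ ≤ (Real.exp (-lam2⁻¹) * (π / a) ^ ((m : ℝ) / 2))⁻¹ :=
      inv_anti₀ (by positivity) hZ_lb
    rw [mul_inv, ← Real.exp_neg, neg_neg, ← Real.inv_rpow (le_of_lt (div_pos Real.pi_pos ha_pos)),
      inv_div] at h1
    exact h1
  have hγeq : γ = (Real.exp lam2⁻¹ * (a / π) ^ ((m : ℝ) / 2)) * Real.exp lam2⁻¹ := by
    rw [hγ]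
    have h1 : lam1 / (lam2 * π) = a / π := by field_simp [ha]; rw [ha]; field_simp
    have h2 : (2 : ℝ) / lam2 = lam2⁻¹ + lam2⁻¹ := by field_simp; ring
    rw [h1, h2, Real.exp_add]
    ring
  have hγ_pos : 0 < γ := by
    rw [hγeq]; positivity
  -- the pointwise bound
  have hFval : ∀ x, F x = Z⁻¹ * h x := hF
  have hFbound : ∀ x : E m, F x ≤ γ * Real.exp (-a * ‖x‖ ^ 2) := by
    intro x
    rw [hFval x, hγeq]
    calc Z⁻¹ * h x ≤ (Real.exp lam2⁻¹ * (a / π) ^ ((m : ℝ) / 2))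
        * (Real.exp lam2⁻¹ * Real.exp (-a * ‖x‖ ^ 2)) := by
          exact mul_le_mul hZinv (hh_ub x) (Real.exp_nonneg _) (by positivity)
      _ = Real.exp lam2⁻¹ * (a / π) ^ ((m : ℝ) / 2) * Real.exp lam2⁻¹
        * Real.exp (-a * ‖x‖ ^ 2) := by ring
  -- derivative of F
  refine fun x => ⟨hFbound x, ?_⟩
  have hnsq : HasFDerivAt (fun x : E m => ‖x‖ ^ 2) (2 • (innerSL ℝ x)) x := by
    simpa using (hasFDerivAt_id x).norm_sq
  have h2L : lam1 • ((2:ℕ) • (innerSL ℝ x)) = (lam1 * 2) • (innerSL ℝ x) := by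
    rw [← Nat.cast_smul_eq_nsmul ℝ, smul_smul]
    norm_num
  set D : E m →L[ℝ] ℝ := -lam2⁻¹ • (Φ x + (lam1 * 2) • (innerSL ℝ x)) with hDdef
  have hu : HasFDerivAt (fun x => -lam2⁻¹ * (g x + lam1 * ‖x‖ ^ 2)) D x := by
    have h1 := ((hgderiv x).add (hnsq.const_mul lam1)).const_mul (-lam2⁻¹)
    rw [h2L] at h1
    exact h1
  have hFd : HasFDerivAt F (Z⁻¹ • h x • D) x := by
    have hFfun : F = fun x => Z⁻¹ * h x := funext hFval
    rw [hFfun]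
    exact (hu.exp).const_mul Z⁻¹
  have hDnorm : ‖D‖ ≤ lam2⁻¹ * (L0 + 2 * lam1 * ‖x‖) := by
    rw [hDdef]
    have h2 : ‖(lam1 * 2) • (innerSL ℝ x)‖ = lam1 * 2 * ‖x‖ := by
      rw [norm_smul (lam1 * 2) (innerSL ℝ x), innerSL_apply_norm, Real.norm_eq_abs,
        abs_of_nonneg (by positivity : (0:ℝ) ≤ lam1 * 2)]
    have h1 : ‖-lam2⁻¹ • (Φ x + (lam1 * 2) • (innerSL ℝ x))‖
        = lam2⁻¹ * ‖Φ x + (lam1 * 2) • (innerSL ℝ x)‖ := by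
      rw [norm_smul (-lam2⁻¹) (Φ x + (lam1 * 2) • (innerSL ℝ x)), Real.norm_eq_abs, abs_neg,
        abs_of_nonneg (le_of_lt (inv_pos.2 hlam2))]
    rw [h1]
    have h3 := (norm_add_le (Φ x) ((lam1 * 2) • (innerSL ℝ x)))
    rw [h2] at h3
    have h5 := hΦnorm x
    have h4 : ‖Φ x + (lam1 * 2) • (innerSL ℝ x)‖ ≤ L0 + 2 * lam1 * ‖x‖ := by linarith
    exact mul_le_mul_of_nonneg_left h4 (le_of_lt (inv_pos.2 hlam2))
  -- final numeric estimate
  have hgradval : ‖gradient F x‖ = Z⁻¹ * h x * ‖D‖ := by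
    rw [hng, hFd.fderiv, norm_smul Z⁻¹ (h x • D), norm_smul (h x) D, Real.norm_eq_abs,
      Real.norm_eq_abs, abs_of_nonneg (le_of_lt (inv_pos.2 hZ_pos)),
      abs_of_nonneg (Real.exp_nonneg _)]
    ring
  rw [hgradval]
  have hFb := hFbound x
  rw [hFval x] at hFb
  set t : ℝ := ‖x‖ with htdef
  have ht : 0 ≤ t := norm_nonneg x
  have key : Real.exp (-a * t ^ 2) * (lam2⁻¹ * (L0 + 2 * lam1 * t))
      ≤ L0 / lam2 + Real.sqrt (2 * lam1 / lam2) := by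
    have hexp1 : Real.exp (-a * t ^ 2) ≤ 1 := Real.exp_le_one_iff.2 (by
      have h0 : 0 ≤ a * t ^ 2 := mul_nonneg ha_pos.le (sq_nonneg t)
      linarith)
    have hexp2 : 1 + a * t ^ 2 ≤ Real.exp (a * t ^ 2) := by
      have := Real.add_one_le_exp (a * t ^ 2); linarith
    have hs1 : Real.sqrt a ^ 2 = a := Real.sq_sqrt (le_of_lt ha_pos)
    have hs2 : Real.sqrt (2 * a) = Real.sqrt 2 * Real.sqrt a := Real.sqrt_mul (by norm_num) a
    have hr2 : (1:ℝ) ≤ Real.sqrt 2 := by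
      nlinarith [Real.sq_sqrt (show (0:ℝ) ≤ 2 by norm_num), Real.sqrt_nonneg 2]
    have hmain : 2 * a * t ≤ Real.sqrt (2 * a) * Real.exp (a * t ^ 2) := by
      have h1 : 2 * Real.sqrt a * t ≤ 1 + a * t ^ 2 := by
        nlinarith [sq_nonneg (Real.sqrt a * t - 1)]
      have h2 : 2 * a * t ≤ Real.sqrt (2 * a) * (1 + a * t ^ 2) := by
        rw [hs2]
        have hA := mul_le_mul_of_nonneg_left h1
          (mul_nonneg (Real.sqrt_nonneg 2) (Real.sqrt_nonneg a))
        have hB : Real.sqrt 2 * Real.sqrt a * (2 * Real.sqrt a * t)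
            = 2 * Real.sqrt 2 * (a * t) := by
          have hsa : Real.sqrt a * Real.sqrt a = a := Real.mul_self_sqrt ha_pos.le
          linear_combination (2 * Real.sqrt 2 * t) * hsa
        have hC : 0 ≤ (Real.sqrt 2 - 1) * (a * t) :=
          mul_nonneg (sub_nonneg.2 hr2) (mul_nonneg ha_pos.le ht)
        nlinarith [hA, hB, hC]
      refine h2.trans ?_
      have := mul_le_mul_of_nonneg_left hexp2 (Real.sqrt_nonneg (2*a))
      linarith
    have h2a : 2 * lam1 / lam2 = 2 * a := by rw [ha]; field_simp
    have hterm2 : Real.exp (-a * t ^ 2) * (lam2⁻¹ * (2 * lam1 * t))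
        ≤ Real.sqrt (2 * lam1 / lam2) := by
      have h3 : lam2⁻¹ * (2 * lam1 * t) = 2 * a * t := by
        rw [ha]; field_simp; try ring
      rw [h3, h2a, neg_mul, Real.exp_neg, inv_mul_le_iff₀ (Real.exp_pos _)]
      calc 2 * a * t ≤ Real.sqrt (2*a) * Real.exp (a * t ^ 2) := hmain
        _ = Real.exp (a * t ^ 2) * Real.sqrt (2 * a) := by ring
    have hterm1 : Real.exp (-a * t ^ 2) * (lam2⁻¹ * L0) ≤ L0 / lam2 := by
      have hL0lam : lam2⁻¹ * L0 = L0 / lam2 := by field_simp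
      rw [hL0lam]
      have hd : 0 ≤ L0 / lam2 := (div_pos hL0 hlam2).le
      nlinarith [hexp1, hd, Real.exp_nonneg (-a * t ^ 2)]
    have expand : Real.exp (-a * t ^ 2) * (lam2⁻¹ * (L0 + 2 * lam1 * t))
        = Real.exp (-a * t ^ 2) * (lam2⁻¹ * L0)
          + Real.exp (-a * t ^ 2) * (lam2⁻¹ * (2 * lam1 * t)) := by ring
    rw [expand]
    exact add_le_add hterm1 hterm2
  calc Z⁻¹ * h x * ‖D‖ ≤ (γ * Real.exp (-a * t ^ 2)) * (lam2⁻¹ * (L0 + 2 * lam1 * t)) := by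
        apply mul_le_mul hFb hDnorm (norm_nonneg _)
        positivity
    _ = γ * (Real.exp (-a * t ^ 2) * (lam2⁻¹ * (L0 + 2 * lam1 * t))) := by ring
    _ ≤ γ * (L0 / lam2 + Real.sqrt (2 * lam1 / lam2)) :=
        mul_le_mul_of_nonneg_left key (le_of_lt hγ_pos)
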